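/- (Full-CSIT diversity and array gains for beamforming.) Let t ≥ 1. Then lim_{P→∞} P^t·∫_{ℂ^t} Q(√(2·‖h‖²·P)) dμ(h) = (1/Γ(t))·∫_0^∞ Q(√(2u))·u^{t−1} du, and this limit is finite and strictly positive. In particular, the full-CSIT SER SERfull(P) = ∫ Q(√(2·‖h‖²·P)) dμ(h) has diversity gain exactly t. -/

import Mathlib

open MeasureTheory

noncomputable instance (t : ℕ) : MeasureSpace (EuclideanSpace ℂ (Fin t)) where
  toMeasurableSpace := inferInstance
  volume := Measure.map (WithLp.toLp 2) (volume : Measure (Fin t → ℂ))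

/-- The Gaussian tail function `Q(x) = (1/√(2π)) ∫_x^∞ exp(-u²/2) du`. -/
noncomputable def gaussianQ (x : ℝ) : ℝ :=
  (Real.sqrt (2 * Real.pi))⁻¹ * ∫ u in Set.Ioi x, Real.exp (-(u ^ 2) / 2)

/-- The standard complex Gaussian measure `CN(0, I_t)` on `ℂ^t`, with density
`h ↦ π^{-t} exp(-‖h‖²)` with respect to Lebesgue measure. -/
noncomputable def stdCGauss (t : ℕ) : Measure (EuclideanSpace ℂ (Fin t)) :=
  volume.withDensity fun h => ENNReal.ofReal ((Real.pi ^ t)⁻¹ * Real.exp (-‖h‖ ^ 2))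

section Aux

open Set Filter

instance (t : ℕ) : BorelSpace (EuclideanSpace ℂ (Fin t)) := inferInstance

instance (t : ℕ) : (volume : Measure (EuclideanSpace ℂ (Fin t))).IsAddHaarMeasure :=
  (PiLp.continuousLinearEquiv 2 ℝ (fun _ : Fin t => ℂ)).symm.isAddHaarMeasure_map _

lemma aux_finrank_eq (t : ℕ) : Module.finrank ℝ (EuclideanSpace ℂ (Fin t)) = 2 * t := by
  rw [← Module.finrank_mul_finrank ℝ ℂ (EuclideanSpace ℂ (Fin t)), Complex.finrank_real_complex,
    finrank_euclideanSpace, Fintype.card_fin]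

lemma aux_gk_eq : (fun u : ℝ => Real.exp (-(u ^ 2) / 2))
    = fun u : ℝ => Real.exp (-(1/2 : ℝ) * u ^ 2) := funext fun u => by ring_nf

lemma aux_integrable_gk : Integrable (fun u : ℝ => Real.exp (-(u ^ 2) / 2)) := by
  rw [aux_gk_eq]; exact integrable_exp_neg_mul_sq (by norm_num)

lemma aux_integral_gk : ∫ u : ℝ, Real.exp (-(u ^ 2) / 2) = Real.sqrt (2 * Real.pi) := by
  rw [aux_gk_eq, integral_gaussian]
  congr 1; ring

lemma gaussianQ_nonneg (x : ℝ) : 0 ≤ gaussianQ x :=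
  mul_nonneg (inv_nonneg.2 (Real.sqrt_nonneg _))
    (setIntegral_nonneg measurableSet_Ioi fun u _ => (Real.exp_pos _).le)

lemma gaussianQ_pos (x : ℝ) : 0 < gaussianQ x := by
  refine mul_pos (inv_pos.2 (Real.sqrt_pos.2 (by positivity))) ?_
  rw [setIntegral_pos_iff_support_of_nonneg_ae]
  · have : Function.support (fun u : ℝ => Real.exp (-(u ^ 2) / 2)) = univ := by
      ext u; simp [Function.mem_support, (Real.exp_pos _).ne']
    rw [this, univ_inter]
    simp [Real.volume_Ioi]
  · exact Filter.Eventually.of_forall fun u => (Real.exp_pos _).le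
  · exact aux_integrable_gk.integrableOn

lemma gaussianQ_anti : Antitone gaussianQ := by
  intro x y hxy
  refine mul_le_mul_of_nonneg_left ?_ (inv_nonneg.2 (Real.sqrt_nonneg _))
  exact setIntegral_mono_set aux_integrable_gk.integrableOn
    (Filter.Eventually.of_forall fun u => (Real.exp_pos _).le)
    (HasSubset.Subset.eventuallyLE (Ioi_subset_Ioi hxy))

lemma gaussianQ_measurable : Measurable gaussianQ := gaussianQ_anti.measurable

lemma gaussianQ_le (x : ℝ) (hx : 0 ≤ x) : gaussianQ x ≤ Real.exp (-(x ^ 2) / 2) := by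
  have key : ∫ u in Ioi x, Real.exp (-(u ^ 2) / 2)
      ≤ Real.exp (-(x ^ 2) / 2) * Real.sqrt (2 * Real.pi) := by
    have h1 : ∫ u in Ioi x, Real.exp (-(u ^ 2) / 2)
        ≤ ∫ u in Ioi x, Real.exp (-(x ^ 2) / 2) * Real.exp (-((u - x) ^ 2) / 2) := by
      refine setIntegral_mono_on aux_integrable_gk.integrableOn ?_ measurableSet_Ioi ?_
      · exact ((aux_integrable_gk.comp_sub_right x).const_mul _).integrableOn
      · intro u hu
        rw [← Real.exp_add, Real.exp_le_exp]
        nlinarith [le_of_lt (mem_Ioi.mp hu)]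
    have h2 : ∫ u in Ioi x, Real.exp (-(x ^ 2) / 2) * Real.exp (-((u - x) ^ 2) / 2)
        = Real.exp (-(x ^ 2) / 2) * ∫ u in Ioi x, Real.exp (-((u - x) ^ 2) / 2) :=
      integral_const_mul _ _
    have h3 : ∫ u in Ioi x, Real.exp (-((u - x) ^ 2) / 2) ≤ Real.sqrt (2 * Real.pi) := by
      calc ∫ u in Ioi x, Real.exp (-((u - x) ^ 2) / 2)
          ≤ ∫ u : ℝ, Real.exp (-((u - x) ^ 2) / 2) :=
            setIntegral_le_integral (aux_integrable_gk.comp_sub_right x)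
              (Filter.Eventually.of_forall fun u => (Real.exp_pos _).le)
        _ = ∫ u : ℝ, Real.exp (-(u ^ 2) / 2) :=
            integral_sub_right_eq_self (fun u => Real.exp (-(u ^ 2) / 2)) x
        _ = Real.sqrt (2 * Real.pi) := aux_integral_gk
    calc ∫ u in Ioi x, Real.exp (-(u ^ 2) / 2) ≤ _ := h1
      _ = _ := h2
      _ ≤ Real.exp (-(x ^ 2) / 2) * Real.sqrt (2 * Real.pi) :=
          mul_le_mul_of_nonneg_left h3 (Real.exp_pos _).le
  rw [gaussianQ, inv_mul_le_iff₀ (Real.sqrt_pos.2 (by positivity))]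
  rw [mul_comm] at key
  exact key

/-- normalization constant in the polar decomposition. -/
noncomputable def auxCt (t : ℕ) : ℝ :=
  (2 * t : ℝ) * (volume (Metric.ball (0 : EuclideanSpace ℂ (Fin t)) 1)).toReal
    * (2⁻¹ * (Real.pi ^ t)⁻¹)

lemma aux_key_identity (t : ℕ) (ht : 1 ≤ t) (f : ℝ → ℝ) :
    ∫ h : EuclideanSpace ℂ (Fin t), (Real.pi ^ t)⁻¹ * Real.exp (-‖h‖ ^ 2) * f (‖h‖ ^ 2)
      = auxCt t * ∫ u in Ioi (0 : ℝ), u ^ (t - 1) * Real.exp (-u) * f u := by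
  obtain ⟨k, rfl⟩ : ∃ k, t = k + 1 := ⟨t - 1, by omega⟩
  set t := k + 1 with htk
  haveI : Nonempty (Fin t) := Fin.pos_iff_nonempty.mp (by omega)
  haveI : Nontrivial (EuclideanSpace ℂ (Fin t)) :=
    (WithLp.toLp_injective 2).nontrivial
  set g : ℝ → ℝ := fun r => (Real.pi ^ t)⁻¹ * Real.exp (-r ^ 2) * f (r ^ 2) with hg
  have h1 : ∫ h : EuclideanSpace ℂ (Fin t), (Real.pi ^ t)⁻¹ * Real.exp (-‖h‖ ^ 2) * f (‖h‖ ^ 2)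
      = ∫ h : EuclideanSpace ℂ (Fin t), g ‖h‖ := rfl
  rw [h1, integral_fun_norm_addHaar volume g, aux_finrank_eq t]
  set c : ℝ := (volume (Metric.ball (0 : EuclideanSpace ℂ (Fin t)) 1)).toReal with hc
  set G : ℝ → ℝ := fun u => (2⁻¹ * (Real.pi ^ t)⁻¹) * (u ^ (t - 1) * Real.exp (-u) * f u)
    with hG
  have h2 : ∫ y in Ioi (0:ℝ), y ^ (2 * t - 1) • g y = ∫ u in Ioi (0:ℝ), G u := by
    rw [← integral_comp_rpow_Ioi G (by norm_num : (2:ℝ) ≠ 0)]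
    refine setIntegral_congr_fun measurableSet_Ioi fun x hx => ?_
    have hx0 : (0:ℝ) < x := hx
    have hx2 : x ^ (2:ℝ) = x ^ 2 := by
      rw [show (2:ℝ) = ((2:ℕ):ℝ) by norm_num, Real.rpow_natCast]
    have hx1 : x ^ ((2:ℝ) - 1) = x := by
      norm_num
    rw [hx2, hx1]
    show x ^ (2 * t - 1) • g x = (|2| * x) • G (x ^ 2)
    rw [smul_eq_mul, smul_eq_mul, hG, hg]
    show x ^ (2 * t - 1) * ((Real.pi ^ t)⁻¹ * Real.exp (-x ^ 2) * f (x ^ 2))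
      = |2| * x * (2⁻¹ * (Real.pi ^ t)⁻¹ * ((x ^ 2) ^ (t - 1) * Real.exp (-x ^ 2) * f (x ^ 2)))
    have e1 : t - 1 = k := rfl
    have e2 : 2 * t - 1 = 2 * k + 1 := by omega
    rw [e1, e2, abs_of_nonneg (by norm_num : (0:ℝ) ≤ 2), ← pow_mul]
    ring
  rw [h2]
  rw [nsmul_eq_mul, smul_eq_mul, hG, auxCt]
  rw [integral_const_mul]
  push_cast
  simp only [measureReal_def]
  ring

lemma aux_integral_real_gauss : ∫ x : ℝ, (Real.sqrt Real.pi)⁻¹ * Real.exp (-x ^ 2) = 1 := by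
  rw [integral_const_mul]
  have h1 : ∀ x : ℝ, -x ^ 2 = -(1:ℝ) * x ^ 2 := fun x => by ring
  simp_rw [h1, integral_gaussian]
  rw [div_one, inv_mul_cancel₀ (Real.sqrt_pos.2 Real.pi_pos).ne']

lemma aux_integral_complex_gauss : ∫ z : ℂ, (Real.pi)⁻¹ * Real.exp (-‖z‖ ^ 2) = 1 := by
  have h := (Complex.volume_preserving_equiv_real_prod.symm).integral_comp
    (Complex.measurableEquivRealProd.symm.measurableEmbedding)
    (fun z : ℂ => (Real.pi)⁻¹ * Real.exp (-‖z‖ ^ 2))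
  rw [← h]
  have hnorm : ∀ p : ℝ × ℝ, ‖Complex.measurableEquivRealProd.symm p‖ ^ 2 = p.1 ^ 2 + p.2 ^ 2 := by
    intro p
    rw [Complex.measurableEquivRealProd_symm_apply, Complex.sq_norm,
      Complex.normSq_apply]
    simp only []
    ring
  simp_rw [hnorm]
  have hsq : (Real.sqrt Real.pi)⁻¹ * (Real.sqrt Real.pi)⁻¹ = (Real.pi)⁻¹ := by
    rw [← mul_inv, Real.mul_self_sqrt Real.pi_pos.le]
  have heq : ∀ p : ℝ × ℝ, (Real.pi)⁻¹ * Real.exp (-(p.1 ^ 2 + p.2 ^ 2))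
      = ((Real.sqrt Real.pi)⁻¹ * Real.exp (-p.1 ^ 2))
        * ((Real.sqrt Real.pi)⁻¹ * Real.exp (-p.2 ^ 2)) := by
    intro p
    rw [neg_add, Real.exp_add, ← hsq]; ring
  simp_rw [heq]
  rw [show (volume : Measure (ℝ × ℝ)) = (volume : Measure ℝ).prod volume from rfl]
  rw [integral_prod_mul (fun x : ℝ => (Real.sqrt Real.pi)⁻¹ * Real.exp (-x ^ 2))
    (fun y : ℝ => (Real.sqrt Real.pi)⁻¹ * Real.exp (-y ^ 2))]
  rw [aux_integral_real_gauss, one_mul]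

lemma aux_mass_one (t : ℕ) :
    ∫ h : EuclideanSpace ℂ (Fin t), (Real.pi ^ t)⁻¹ * Real.exp (-‖h‖ ^ 2) = 1 := by
  have hnorm : ∀ h : EuclideanSpace ℂ (Fin t), ‖h‖ ^ 2 = ∑ i, ‖h i‖ ^ 2 := by
    intro h
    rw [EuclideanSpace.norm_eq, Real.sq_sqrt]
    exact Finset.sum_nonneg fun i _ => sq_nonneg _
  have heq : ∀ h : EuclideanSpace ℂ (Fin t),
      (Real.pi ^ t)⁻¹ * Real.exp (-‖h‖ ^ 2) = ∏ i, ((Real.pi)⁻¹ * Real.exp (-‖h i‖ ^ 2)) := by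
    intro h
    rw [Finset.prod_mul_distrib, Finset.prod_const, hnorm, ← Real.exp_sum]
    simp [Finset.sum_neg_distrib, inv_pow]
  simp_rw [heq]
  have := MeasureTheory.integral_fintype_prod_eq_pow (ι := Fin t)
    (fun z : ℂ => (Real.pi)⁻¹ * Real.exp (-‖z‖ ^ 2)) (μ := volume)
  rw [← MeasureTheory.volume_pi] at this
  rw [show (∫ h : EuclideanSpace ℂ (Fin t), ∏ i, ((Real.pi)⁻¹ * Real.exp (-‖h i‖ ^ 2)))
    = ∫ x : Fin t → ℂ, ∏ i, ((Real.pi)⁻¹ * Real.exp (-‖x i‖ ^ 2)) from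
      integral_map_equiv (MeasurableEquiv.toLp 2 (Fin t → ℂ)) _, this,
    aux_integral_complex_gauss, one_pow]

lemma aux_Ct_eq (t : ℕ) (ht : 1 ≤ t) : auxCt t = (Real.Gamma t)⁻¹ := by
  have ht0 : (0:ℝ) < t := by exact_mod_cast ht
  have hG : Real.Gamma t = ∫ u in Ioi (0:ℝ), u ^ (t - 1) * Real.exp (-u) * 1 := by
    rw [Real.Gamma_eq_integral ht0]
    refine setIntegral_congr_fun measurableSet_Ioi fun x hx => ?_
    have : x ^ ((t:ℝ) - 1) = x ^ (t - 1) := by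
      rw [show (t:ℝ) - 1 = ((t - 1 : ℕ) : ℝ) by
        rw [Nat.cast_sub ht]; norm_num, Real.rpow_natCast]
    rw [this]; ring
  have h1 := aux_key_identity t ht (fun _ => 1)
  simp only [mul_one] at h1 hG
  rw [aux_mass_one t, ← hG] at h1
  have hGpos : 0 < Real.Gamma t := Real.Gamma_pos_of_pos ht0
  field_simp at h1 ⊢
  linarith [h1]

lemma aux_integrableOn (t : ℕ) (ht : 1 ≤ t) :
    IntegrableOn (fun u : ℝ => gaussianQ (Real.sqrt (2 * u)) * u ^ (t - 1)) (Ioi 0) := by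
  have hmeas : Measurable (fun u : ℝ => gaussianQ (Real.sqrt (2 * u)) * u ^ (t - 1)) := by
    exact (gaussianQ_measurable.comp
      (Real.continuous_sqrt.measurable.comp (measurable_const_mul 2))).mul
      (measurable_id.pow_const _)
  have hdom : IntegrableOn (fun u : ℝ => Real.exp (-u) * u ^ (t - 1)) (Ioi 0) := by
    refine (Real.GammaIntegral_convergent (s := t) (by exact_mod_cast ht)).congr_fun ?_
      measurableSet_Ioi
    intro x hx
    have hcast : (t:ℝ) - 1 = ((t - 1 : ℕ) : ℝ) := by rw [Nat.cast_sub ht]; norm_num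
    simp only [hcast, Real.rpow_natCast]
  refine hdom.integrable.mono hmeas.aestronglyMeasurable.restrict ?_
  rw [ae_restrict_iff' measurableSet_Ioi]
  refine Filter.Eventually.of_forall fun u hu => ?_
  have hu0 : (0:ℝ) < u := hu
  have h2u : (0:ℝ) ≤ 2 * u := by linarith
  rw [Real.norm_eq_abs, Real.norm_eq_abs,
    abs_of_nonneg (mul_nonneg (gaussianQ_nonneg _) (pow_nonneg hu0.le _)),
    abs_of_nonneg (mul_nonneg (Real.exp_pos _).le (pow_nonneg hu0.le _))]
  refine mul_le_mul_of_nonneg_right ?_ (pow_nonneg hu0.le _)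
  calc gaussianQ (Real.sqrt (2 * u)) ≤ Real.exp (-(Real.sqrt (2 * u) ^ 2) / 2) :=
        gaussianQ_le _ (Real.sqrt_nonneg _)
    _ = Real.exp (-u) := by rw [Real.sq_sqrt h2u]; congr 1; ring

end Aux

/-- Full-CSIT diversity and array gains for beamforming:
`P^t · SERfull(P) → (1/Γ(t)) ∫_0^∞ Q(√(2u)) u^{t-1} du`, a finite and strictly positive
limit; in particular the full-CSIT SER has diversity gain exactly `t`. -/
theorem full_csit_gains (t : ℕ) (ht : 1 ≤ t) :
    MeasureTheory.IntegrableOn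
        (fun u : ℝ => gaussianQ (Real.sqrt (2 * u)) * u ^ (t - 1)) (Set.Ioi 0) ∧
    Filter.Tendsto
      (fun P : ℝ => P ^ t * ∫ h, gaussianQ (Real.sqrt (2 * ‖h‖ ^ 2 * P)) ∂(stdCGauss t))
      Filter.atTop
      (nhds ((Real.Gamma t)⁻¹
        * ∫ u in Set.Ioi (0 : ℝ), gaussianQ (Real.sqrt (2 * u)) * u ^ (t - 1))) ∧
    0 < (Real.Gamma t)⁻¹
        * ∫ u in Set.Ioi (0 : ℝ), gaussianQ (Real.sqrt (2 * u)) * u ^ (t - 1) := by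
  classical
  open Set Filter in
  refine ⟨aux_integrableOn t ht, ?_, ?_⟩
  · -- the limit
    -- Step 1: identity for each P > 0
    have main_eq : ∀ P : ℝ, 0 < P →
        P ^ t * ∫ h, gaussianQ (Real.sqrt (2 * ‖h‖ ^ 2 * P)) ∂(stdCGauss t)
          = (Real.Gamma t)⁻¹ * ∫ v in Ioi (0:ℝ),
              gaussianQ (Real.sqrt (2 * v)) * v ^ (t - 1) * Real.exp (-(v * P⁻¹)) := by
      intro P hP
      -- withDensity
      have hdens : ∫ h, gaussianQ (Real.sqrt (2 * ‖h‖ ^ 2 * P)) ∂(stdCGauss t)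
          = ∫ h : EuclideanSpace ℂ (Fin t), (Real.pi ^ t)⁻¹ * Real.exp (-‖h‖ ^ 2)
              * gaussianQ (Real.sqrt (2 * ‖h‖ ^ 2 * P)) := by
        rw [stdCGauss]
        have hfm : Measurable (fun h : EuclideanSpace ℂ (Fin t) =>
            ((Real.pi ^ t)⁻¹ * Real.exp (-‖h‖ ^ 2)).toNNReal) :=
          (measurable_const.mul
            ((measurable_norm.pow_const 2).neg.exp)).real_toNNReal
        rw [show (fun h : EuclideanSpace ℂ (Fin t) =>
            ENNReal.ofReal ((Real.pi ^ t)⁻¹ * Real.exp (-‖h‖ ^ 2)))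
          = fun h : EuclideanSpace ℂ (Fin t) =>
            (((Real.pi ^ t)⁻¹ * Real.exp (-‖h‖ ^ 2)).toNNReal : ENNReal) from rfl]
        rw [integral_withDensity_eq_integral_smul hfm]
        refine integral_congr_ae (Filter.Eventually.of_forall fun h => ?_)
        simp only [NNReal.smul_def, smul_eq_mul]
        rw [Real.coe_toNNReal _ (by positivity)]
      rw [hdens]
      have hkey := aux_key_identity t ht (fun u => gaussianQ (Real.sqrt (2 * u * P)))
      rw [hkey, aux_Ct_eq t ht]
      -- scaling substitution v = P * u
      set F : ℝ → ℝ := fun v =>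
        gaussianQ (Real.sqrt (2 * v)) * v ^ (t - 1) * Real.exp (-(v * P⁻¹)) with hF
      have hscale := integral_comp_mul_left_Ioi F 0 hP
      rw [mul_zero] at hscale
      have hcongr : ∫ u in Ioi (0:ℝ), F (P * u)
          = P ^ (t-1) * ∫ u in Ioi (0:ℝ), u ^ (t - 1) * Real.exp (-u)
              * gaussianQ (Real.sqrt (2 * u * P)) := by
        rw [← integral_const_mul]
        refine setIntegral_congr_fun measurableSet_Ioi fun u hu => ?_
        have : F (P * u) = gaussianQ (Real.sqrt (2 * u * P))
            * ((P * u) ^ (t - 1)) * Real.exp (-u) := by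
          rw [hF]
          have h1 : 2 * (P * u) = 2 * u * P := by ring
          have h2 : P * u * P⁻¹ = u := by field_simp
          simp only [h1, h2]
        rw [this, mul_pow]
        ring
      rw [hcongr] at hscale
      -- hscale : P^(t-1) * J = P⁻¹ • ∫ F
      rw [smul_eq_mul] at hscale
      have hPt : P ^ t = P * P ^ (t - 1) := by
        conv_lhs => rw [show t = 1 + (t - 1) by omega]
        rw [pow_add, pow_one]
      rw [hPt]
      have : P * P ^ (t - 1) * ((Real.Gamma t)⁻¹
          * ∫ u in Ioi (0:ℝ), u ^ (t - 1) * Real.exp (-u)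
              * gaussianQ (Real.sqrt (2 * u * P)))
          = (Real.Gamma t)⁻¹ * (P * (P ^ (t - 1)
            * ∫ u in Ioi (0:ℝ), u ^ (t - 1) * Real.exp (-u)
                * gaussianQ (Real.sqrt (2 * u * P)))) := by ring
      rw [this, hscale]
      field_simp
    -- Step 2: dominated convergence
    have hTend : Filter.Tendsto
        (fun P : ℝ => ∫ v in Ioi (0:ℝ),
            gaussianQ (Real.sqrt (2 * v)) * v ^ (t - 1) * Real.exp (-(v * P⁻¹)))
        Filter.atTop
        (nhds (∫ v in Ioi (0:ℝ), gaussianQ (Real.sqrt (2 * v)) * v ^ (t - 1))) := by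
      refine tendsto_integral_filter_of_dominated_convergence
        (fun v => gaussianQ (Real.sqrt (2 * v)) * v ^ (t - 1)) ?_ ?_ ?_ ?_
      · refine Filter.Eventually.of_forall fun P => ?_
        refine Measurable.aestronglyMeasurable ?_
        exact ((gaussianQ_measurable.comp
          (Real.continuous_sqrt.measurable.comp (measurable_const_mul 2))).mul
          (measurable_id.pow_const _)).mul
          (((measurable_id.mul_const P⁻¹).neg).exp)
      · filter_upwards [Filter.eventually_gt_atTop (0:ℝ)] with P hP
        rw [ae_restrict_iff' measurableSet_Ioi]
        refine Filter.Eventually.of_forall fun v hv => ?_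
        have hv0 : (0:ℝ) < v := hv
        have hbase : 0 ≤ gaussianQ (Real.sqrt (2 * v)) * v ^ (t - 1) :=
          mul_nonneg (gaussianQ_nonneg _) (pow_nonneg hv0.le _)
        rw [Real.norm_eq_abs, abs_of_nonneg (mul_nonneg hbase (Real.exp_pos _).le)]
        calc gaussianQ (Real.sqrt (2 * v)) * v ^ (t - 1) * Real.exp (-(v * P⁻¹))
            ≤ gaussianQ (Real.sqrt (2 * v)) * v ^ (t - 1) * 1 := by
              refine mul_le_mul_of_nonneg_left ?_ hbase
              rw [Real.exp_le_one_iff, neg_nonpos]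
              positivity
          _ = gaussianQ (Real.sqrt (2 * v)) * v ^ (t - 1) := mul_one _
      · exact aux_integrableOn t ht
      · refine Filter.Eventually.of_forall fun v => ?_
        have h1 : Filter.Tendsto (fun P : ℝ => -(v * P⁻¹)) Filter.atTop (nhds 0) := by
          rw [show (0:ℝ) = -(v * 0) by ring]
          exact ((tendsto_inv_atTop_zero.const_mul v)).neg
        have h2 : Filter.Tendsto (fun P : ℝ => Real.exp (-(v * P⁻¹)))
            Filter.atTop (nhds 1) := by
          rw [show (1:ℝ) = Real.exp 0 by rw [Real.exp_zero]]
          exact (Real.continuous_exp.tendsto 0).comp h1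
        have := (tendsto_const_nhds
          (x := gaussianQ (Real.sqrt (2 * v)) * v ^ (t - 1))
          (f := Filter.atTop (α := ℝ))).mul h2
        rwa [mul_one] at this
    refine (hTend.const_mul ((Real.Gamma t)⁻¹)).congr' ?_
    filter_upwards [Filter.eventually_gt_atTop (0:ℝ)] with P hP
    exact (main_eq P hP).symm
  · -- positivity
    have ht0 : (0:ℝ) < t := by exact_mod_cast ht
    refine mul_pos (inv_pos.2 (Real.Gamma_pos_of_pos ht0)) ?_
    rw [setIntegral_pos_iff_support_of_nonneg_ae]
    · have hsub : Ioi (0:ℝ) ⊆ Function.support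
          (fun u : ℝ => gaussianQ (Real.sqrt (2 * u)) * u ^ (t - 1)) := by
        intro u hu
        have hu0 : (0:ℝ) < u := hu
        exact (mul_pos (gaussianQ_pos _) (pow_pos hu0 _)).ne'
      have : Function.support
          (fun u : ℝ => gaussianQ (Real.sqrt (2 * u)) * u ^ (t - 1)) ∩ Ioi 0 = Ioi 0 :=
        Set.inter_eq_self_of_subset_right hsub
      rw [this]
      simp [Real.volume_Ioi]
    · refine ae_restrict_of_forall_mem measurableSet_Ioi fun u hu => ?_
      have hu0 : (0:ℝ) < u := hu
      have : 0 ≤ gaussianQ (Real.sqrt (2 * u)) * u ^ (t - 1) :=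
        mul_nonneg (gaussianQ_nonneg _) (pow_nonneg hu0.le _)
      exact this
    · exact aux_integrableOn t ht
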